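/- Let G be an admissible marked graph and M̄(G) its associated fine saturated sharp monoid. If e ∈ M̄(G) is an irreducible element lying on an extremal ray of the cone C(M̄(G)) ⊆ M̄(G)^gp ⊗ ℚ, then there exist a positive integer n such that either n·e equals the element e_v associated to some minimal vertex v, or n·e equals the element e_l associated to some edge l. -/

import Mathlib

/-- Let `G` be an admissible marked graph with associated fine saturated
sharp monoid `M̄(G)`, realized as a submonoid `Q` of its Grothendieck group `G0`, together
with the classes `ev : V → G0` of vertices and `el : E → G0` of edges satisfying the defining
relations.  The submonoid `N(G)` is the submonoid generated by the images of the `ev` and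
`el`, and every element of `Q` has a positive multiple in `N(G)`.  If `e ∈ Q` is an
irreducible element lying on an extremal ray of the cone of `Q`, then there is a positive
integer `n` such that either `n • e = ev v` for some minimal vertex `v` (a vertex which is
not the end vertex of any oriented edge), or `n • e = el l` for some edge `l`. -/
theorem irreducible_extremal_is_vertex_or_edge
    {V E G0 : Type*} [Fintype V] [Fintype E] [AddCommGroup G0]
    (initV finV : E → V) (c : E → ℕ) (nondeg : Set V)
    (Q : AddSubmonoid G0) (ev : V → G0) (el : E → G0)
    (hevQ : ∀ v, ev v ∈ Q) (helQ : ∀ l, el l ∈ Q)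
    (hnond : ∀ v ∈ nondeg, ev v = 0)
    (hrel : ∀ l : E, ev (finV l) = ev (initV l) + c l • el l)
    (hQfg : Q.FG)
    (hgen : ∀ g : G0, ∃ a ∈ Q, ∃ b ∈ Q, g = a - b)
    (hsat : ∀ g : G0, (∃ n : ℕ, 0 < n ∧ n • g ∈ Q) → g ∈ Q)
    (hsharp : ∀ g ∈ Q, -g ∈ Q → g = 0)
    (helne : ∀ l : E, el l ≠ 0)
    (hmul : ∀ a ∈ Q, ∃ m : ℕ, 0 < m ∧
      m • a ∈ AddSubmonoid.closure (Set.range ev ∪ Set.range el))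
    (e : G0) (heQ : e ∈ Q) (hne : e ≠ 0)
    (hirr : ∀ a ∈ Q, ∀ b ∈ Q, e = a + b → a = 0 ∨ b = 0)
    (hext : ∀ u ∈ Q, ∀ v ∈ Q, ∀ k : ℕ, 0 < k → k • e = u + v →
      ∃ p q m : ℕ, 0 < m ∧ m • u = p • e ∧ m • v = q • e) :
    ∃ n : ℕ, 0 < n ∧
      ((∃ v : V, (¬ ∃ l : E, finV l = v ∧ 0 < c l) ∧ n • e = ev v) ∨
        (∃ l : E, n • e = el l)) := by
  -- Q has no torsion elements
  have htf : ∀ g ∈ Q, ∀ k : ℕ, 0 < k → k • g = 0 → g = 0 := by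
    intro g hg k hk h0
    refine hsharp g hg ?_
    have h1 : (k - 1) • g + g = 0 := by
      rw [← succ_nsmul, Nat.sub_add_cancel hk, h0]
    have : -g = (k - 1) • g := by
      rw [eq_comm, ← add_eq_zero_iff_eq_neg, h1]
    rw [this]
    exact nsmul_mem hg _
  have hene : ∀ k : ℕ, 0 < k → k • e ≠ 0 := by
    intro k hk h
    exact hne (htf e heQ k hk h)
  -- elements of Q rationally proportional to e are multiples of e
  have hray : ∀ q ∈ Q, ∀ a b : ℕ, 0 < a → a • q = b • e → ∃ n : ℕ, q = n • e := by
    intro q hq a b ha hab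
    set n := b / a with hn
    set r := b % a with hr
    have hrlt : r < a := Nat.mod_lt _ ha
    have hb : a * n + r = b := Nat.div_add_mod b a
    have hx1 : a • (q - n • e) = r • e := by
      rw [smul_sub, hab, smul_smul, ← hb, add_nsmul, add_sub_cancel_left]
    have hxQ : q - n • e ∈ Q := hsat _ ⟨a, ha, by rw [hx1]; exact nsmul_mem heQ r⟩
    have hy1 : a • (e - (q - n • e)) = (a - r) • e := by
      rw [smul_sub, hx1]
      nth_rewrite 1 [← Nat.sub_add_cancel hrlt.le]
      rw [add_nsmul, add_sub_cancel_right]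
    have hyQ : e - (q - n • e) ∈ Q := hsat _ ⟨a, ha, by rw [hy1]; exact nsmul_mem heQ _⟩
    rcases hirr _ hxQ _ hyQ (by abel) with h | h
    · exact ⟨n, by rw [sub_eq_zero] at h; exact h⟩
    · exfalso
      rw [sub_eq_zero] at h
      have hae : a • e = r • e := by rw [← hx1, ← h]
      have h2 : (a - r) • e + r • e = 0 + r • e := by
        rw [← add_nsmul, Nat.sub_add_cancel hrlt.le, hae, zero_add]
      have h0 : (a - r) • e = 0 := add_right_cancel h2
      exact hne (htf e heQ (a - r) (by omega) h0)
  -- edges proportional to e give the conclusion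
  have hedge : ∀ l : E, ∀ a b : ℕ, 0 < a → a • el l = b • e →
      ∃ n : ℕ, 0 < n ∧ n • e = el l := by
    intro l a b ha hab
    obtain ⟨n, hn⟩ := hray _ (helQ l) a b ha hab
    refine ⟨n, ?_, hn.symm⟩
    rcases Nat.eq_zero_or_pos n with h | h
    · exfalso; exact helne l (by rw [hn, h, zero_smul])
    · exact h
  have hsub : AddSubmonoid.closure (Set.range ev ∪ Set.range el) ≤ Q := by
    rw [AddSubmonoid.closure_le]
    rintro x (⟨v, rfl⟩ | ⟨l, rfl⟩)
    exacts [hevQ v, helQ l]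
  -- main induction over the closure
  have key : ∀ x ∈ AddSubmonoid.closure (Set.range ev ∪ Set.range el),
      ∀ k : ℕ, 0 < k → k • e = x →
      ∃ n : ℕ, 0 < n ∧
        ((∃ v : V, (¬ ∃ l : E, finV l = v ∧ 0 < c l) ∧ n • e = ev v) ∨
          (∃ l : E, n • e = el l)) := by
    intro x hx
    induction hx using AddSubmonoid.closure_induction with
    | mem g hg =>
      intro k hk hke
      rcases hg with ⟨v, rfl⟩ | ⟨l, rfl⟩
      · by_cases hmin : ∃ l : E, finV l = v ∧ 0 < c l
        · obtain ⟨l, hfl, hcl⟩ := hmin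
          have hrelv : k • e = ev (initV l) + c l • el l := by
            rw [hke, ← hfl, hrel l]
          obtain ⟨p, q, m, hm, h1, h2⟩ :=
            hext _ (hevQ (initV l)) _ (nsmul_mem (helQ l) _) k hk hrelv
          rw [smul_smul] at h2
          obtain ⟨n, hn, h⟩ := hedge l (m * c l) q (by positivity) h2
          exact ⟨n, hn, Or.inr ⟨l, h⟩⟩
        · exact ⟨k, hk, Or.inl ⟨v, hmin, hke⟩⟩
      · exact ⟨k, hk, Or.inr ⟨l, hke⟩⟩
    | zero =>
      intro k hk hke
      exact absurd hke (hene k hk)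
    | add a b ha hb iha ihb =>
      intro k hk hke
      obtain ⟨p, q, m, hm, h1, h2⟩ := hext a (hsub ha) b (hsub hb) k hk hke
      rcases eq_or_ne a 0 with h0 | h0
      · -- then k • e = b
        rcases eq_or_ne b 0 with hb0 | hb0
        · exact absurd (by rw [hke, h0, hb0, add_zero]) (hene k hk)
        · have hqpos : 0 < q := by
            rcases Nat.eq_zero_or_pos q with hq | hq
            · exact absurd (htf b (hsub hb) m hm (by rw [h2, hq, zero_smul])) hb0
            · exact hq
          obtain ⟨n, hn⟩ := hray b (hsub hb) m q hm h2
          have hnpos : 0 < n := by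
            rcases Nat.eq_zero_or_pos n with h | h
            · exact absurd (by rw [hn, h, zero_smul]) hb0
            · exact h
          exact ihb n hnpos hn.symm
      · have hppos : 0 < p := by
          rcases Nat.eq_zero_or_pos p with hp | hp
          · exact absurd (htf a (hsub ha) m hm (by rw [h1, hp, zero_smul])) h0
          · exact hp
        obtain ⟨n, hn⟩ := hray a (hsub ha) m p hm h1
        have hnpos : 0 < n := by
          rcases Nat.eq_zero_or_pos n with h | h
          · exact absurd (by rw [hn, h, zero_smul]) h0
          · exact h
        exact iha n hnpos hn.symm
  obtain ⟨m, hm, hcl⟩ := hmul e heQ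
  exact key _ hcl m hm rfl
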